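/- Combining existence and uniqueness: for an acyclic cycle orientation configuration 𝔠 on a finite connected graph G, the 𝔠-faithful orientations form a system of representatives for the cycle reversal classes of orientations of G (exactly one per class). -/

import Mathlib

open scoped Classical

variable {V E : Type} [Fintype V] [Fintype E] [DecidableEq V] [DecidableEq E]

/-- Reachability between vertices using (undirected) edges from the set `A`. -/
def ReachIn (ι : E → V × V) (A : Set E) (a b : V) : Prop :=
  Relation.ReflTransGen (fun x y => ∃ e ∈ A, ι e = (x, y) ∨ ι e = (y, x)) a b

/-- The graph with edge set `A` (on all of `V`) is connected. -/
def Conn (ι : E → V × V) (A : Set E) : Prop := ∀ a b : V, ReachIn ι A a b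

/-- `C : E → ℤ` is the signed indicator vector of a (simple, directed) cycle:
entries in `{-1,0,1}`, nonempty support, zero boundary, every vertex meets
0 or 2 support edges, and the support is connected. -/
def IsCycleVec (ι : E → V × V) (C : E → ℤ) : Prop :=
  (∀ e, C e = 0 ∨ C e = 1 ∨ C e = -1) ∧
  (∃ e, C e ≠ 0) ∧
  (∀ v : V, ∑ e : E, C e *
      ((if (ι e).2 = v then 1 else 0) - (if (ι e).1 = v then 1 else 0)) = 0) ∧
  (∀ v : V,
    (Finset.univ.filter fun e => C e ≠ 0 ∧ ((ι e).1 = v ∨ (ι e).2 = v)).card = 0 ∨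
    (Finset.univ.filter fun e => C e ≠ 0 ∧ ((ι e).1 = v ∨ (ι e).2 = v)).card = 2) ∧
  (∀ a b : V, (∃ e, C e ≠ 0 ∧ ((ι e).1 = a ∨ (ι e).2 = a)) →
    (∃ e, C e ≠ 0 ∧ ((ι e).1 = b ∨ (ι e).2 = b)) →
    ReachIn ι {e | C e ≠ 0} a b)

/-- An orientation of `G`, recorded as a sign for each edge relative to the reference
orientation `ι`. -/
def IsOrient (σ : E → ℤ) : Prop := ∀ e, σ e = 1 ∨ σ e = -1

/-- `C` is a directed cycle of the orientation `σ`. -/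
def DirCycle (ι : E → V × V) (σ : E → ℤ) (C : E → ℤ) : Prop :=
  IsCycleVec ι C ∧ ∀ e, C e ≠ 0 → C e = σ e

/-- One cycle reversal step: reverse all edges of a directed cycle of `σ`. -/
def RevStep (ι : E → V × V) (σ τ : E → ℤ) : Prop :=
  ∃ C : E → ℤ, DirCycle ι σ C ∧ ∀ e, τ e = if C e ≠ 0 then -σ e else σ e

/-- A cycle orientation configuration: a choice, for each cycle of `G`, of exactly one of
its two orientations. -/
def IsConfig (ι : E → V × V) (𝔠 : Set (E → ℤ)) : Prop :=
  (∀ C ∈ 𝔠, IsCycleVec ι C) ∧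
  (∀ C : E → ℤ, IsCycleVec ι C → (C ∈ 𝔠 ↔ (fun e => -C e) ∉ 𝔠))

/-- Acyclicity of a configuration: no nontrivial nonnegative integer combination of its
oriented cycle vectors vanishes. -/
def ConfigAcyclic (𝔠 : Set (E → ℤ)) : Prop :=
  ∀ (k : ℕ) (Cs : Fin k → E → ℤ) (n : Fin k → ℕ),
    (∀ i, Cs i ∈ 𝔠) → (∀ e, ∑ i, (n i : ℤ) * Cs i e = 0) → ∀ i, n i = 0

/-- `σ` is `𝔠`-faithful: every directed cycle of `σ` is oriented as prescribed by `𝔠`. -/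
def Faithful (ι : E → V × V) (𝔠 : Set (E → ℤ)) (σ : E → ℤ) : Prop :=
  ∀ C : E → ℤ, DirCycle ι σ C → C ∈ 𝔠


set_option linter.unusedSectionVars false
section AuxLemmas

variable {ι : E → V × V} {𝔠 : Set (E → ℤ)}

lemma orient_ne_zero {σ : E → ℤ} (h : IsOrient σ) (e : E) : σ e ≠ 0 := by
  rcases h e with h'|h' <;> simp [h']

lemma negCycleVec {C : E → ℤ} (h : IsCycleVec ι C) : IsCycleVec ι (fun e => -C e) := by
  obtain ⟨h1, h2, h3, h4, h5⟩ := h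
  refine ⟨fun e => ?_, ?_, fun v => ?_, fun v => ?_, fun a b ha hb => ?_⟩
  · rcases h1 e with h'|h'|h' <;> simp [h']
  · obtain ⟨e, he⟩ := h2; exact ⟨e, by simpa using he⟩
  · simp only [neg_mul, Finset.sum_neg_distrib, h3 v, neg_zero]
  · simpa only [ne_eq, neg_eq_zero] using h4 v
  · have : {e | -C e ≠ 0} = {e | C e ≠ 0} := by ext e; simp
    rw [this]
    exact h5 a b (by simpa using ha) (by simpa using hb)

/-- one reversal step where the reversed cycle is *against* the configuration -/
def BadStep (ι : E → V × V) (𝔠 : Set (E → ℤ)) (σ τ : E → ℤ) : Prop :=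
  ∃ C : E → ℤ, DirCycle ι σ C ∧ (fun e => -C e) ∈ 𝔠 ∧
    ∀ e, τ e = if C e ≠ 0 then -σ e else σ e

lemma badStep_revStep {σ τ : E → ℤ} (h : BadStep ι 𝔠 σ τ) : RevStep ι σ τ := by
  obtain ⟨C, h1, _, h3⟩ := h; exact ⟨C, h1, h3⟩

lemma revStep_orient {σ τ : E → ℤ} (h : RevStep ι σ τ) (hσ : IsOrient σ) : IsOrient τ := by
  obtain ⟨C, _, h3⟩ := h
  intro e
  rw [h3 e]
  rcases hσ e with h'|h' <;> by_cases hc : C e ≠ 0 <;> simp [hc, h']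

lemma revStep_eq {σ τ C : E → ℤ} (hd : DirCycle ι σ C)
    (h3 : ∀ e, τ e = if C e ≠ 0 then -σ e else σ e) (e : E) :
    τ e = σ e + 2 * (-C e) := by
  rw [h3 e]
  by_cases hc : C e = 0
  · simp [hc]
  · have h := hd.2 e hc
    rw [if_pos hc]
    omega

/-- along a BadStep chain, the difference is twice a sum of configuration cycles -/
lemma badChain_sum {α β : E → ℤ} (h : Relation.ReflTransGen (BadStep ι 𝔠) α β) :
    ∃ (k : ℕ) (Ds : Fin k → E → ℤ), (∀ i, Ds i ∈ 𝔠) ∧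
      ∀ e, β e = α e + 2 * ∑ i, Ds i e := by
  induction h with
  | refl => exact ⟨0, Fin.elim0, fun i => i.elim0, fun e => by simp⟩
  | tail hab hbc ih =>
    obtain ⟨k, Ds, hDs, hsum⟩ := ih
    obtain ⟨C, hd, hmem, h3⟩ := hbc
    refine ⟨k + 1, Fin.cons (fun e => -C e) Ds, ?_, fun e => ?_⟩
    · intro i
      refine Fin.cases ?_ ?_ i
      · exact hmem
      · exact hDs
    · simp only [Fin.sum_univ_succ, Fin.cons_zero, Fin.cons_succ]
      have h2 := revStep_eq hd h3 e
      rw [h2, hsum e]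
      ring

lemma no_badCycle (hacyc : ConfigAcyclic 𝔠) {τ : E → ℤ}
    (h : Relation.TransGen (BadStep ι 𝔠) τ τ) : False := by
  rw [Relation.TransGen.head'_iff] at h
  obtain ⟨ρ, hstep, hchain⟩ := h
  obtain ⟨C, hd, hmem, h3⟩ := hstep
  obtain ⟨k, Ds, hDs, hsum⟩ := badChain_sum hchain
  have key : ∀ e, ∑ i : Fin (k+1), ((fun _ => (1:ℕ)) i : ℤ) * (Fin.cons (fun e => -C e) Ds : Fin (k+1) → E → ℤ) i e = 0 := by
    intro e
    have h1 := hsum e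
    have h2 := revStep_eq hd h3 e
    rw [h2] at h1
    simp only [Fin.sum_univ_succ, Fin.cons_zero, Fin.cons_succ, Nat.cast_one, one_mul]
    linarith [h1, h2]
  have := hacyc (k+1) (Fin.cons (fun e => -C e) Ds) (fun _ => 1)
    (fun i => by refine Fin.cases ?_ ?_ i; exact hmem; exact hDs) key 0
  simp at this


lemma exists_faithful (hcfg : IsConfig ι 𝔠) (hacyc : ConfigAcyclic 𝔠)
    (σ : E → ℤ) (hσ : IsOrient σ) :
    ∃ τ, IsOrient τ ∧ Relation.ReflTransGen (RevStep ι) σ τ ∧ Faithful ι 𝔠 τ := by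
  let Sub := {τ : E → ℤ // IsOrient τ ∧ Relation.ReflTransGen (BadStep ι 𝔠) σ τ}
  have hfin : Finite Sub := by
    have hinj : Function.Injective (fun (τ : Sub) (e : E) => decide (τ.1 e = 1)) := by
      intro a b hab
      apply Subtype.ext; funext e
      have h := congrFun hab e
      rcases a.2.1 e with h1|h1 <;> rcases b.2.1 e with h2|h2 <;>
        simp [h1, h2] at h ⊢
    exact Finite.of_injective _ hinj
  let r : Sub → Sub → Prop := fun b a => BadStep ι 𝔠 a.1 b.1
  have hwf : WellFounded r := by
    have irr : ∀ a : Sub, ¬ Relation.TransGen r a a := by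
      intro a ha
      have h2 : Relation.TransGen (Function.swap (BadStep ι 𝔠)) a.1 a.1 :=
        Relation.TransGen.lift Subtype.val (fun x y h => h) a a ha
      exact no_badCycle hacyc (Relation.transGen_swap.mp h2)
    haveI : IsTrans Sub (Relation.TransGen r) := ⟨fun a b c h1 h2 => h1.trans h2⟩
    haveI : IsIrrefl Sub (Relation.TransGen r) := ⟨irr⟩
    exact Subrelation.wf (fun h => Relation.TransGen.single h)
      (Finite.wellFounded_of_trans_of_irrefl _)
  have main : ∀ a : Sub, ∃ τ, IsOrient τ ∧ Relation.ReflTransGen (RevStep ι) σ τ ∧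
      Faithful ι 𝔠 τ := by
    intro a
    refine hwf.induction
      (C := fun _ => ∃ τ, IsOrient τ ∧ Relation.ReflTransGen (RevStep ι) σ τ ∧ Faithful ι 𝔠 τ)
      a ?_
    intro x ih
    by_cases hF : Faithful ι 𝔠 x.1
    · exact ⟨x.1, x.2.1,
        Relation.ReflTransGen.mono (fun a b h => badStep_revStep h) _ _ x.2.2, hF⟩
    · simp only [Faithful, not_forall] at hF
      obtain ⟨C, hd, hC⟩ := hF
      have hnc : (fun e => -C e) ∈ 𝔠 := by
        have := hcfg.2 C hd.1; tauto
      have hb : BadStep ι 𝔠 x.1 (fun e => if C e ≠ 0 then -x.1 e else x.1 e) :=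
        ⟨C, hd, hnc, fun e => rfl⟩
      exact ih ⟨_, revStep_orient (badStep_revStep hb) x.2.1, x.2.2.tail hb⟩ hb
  exact main ⟨σ, hσ, Relation.ReflTransGen.refl⟩


lemma revStep_symm {σ τ : E → ℤ} (h : RevStep ι σ τ) : RevStep ι τ σ := by
  obtain ⟨C, hd, h3⟩ := h
  refine ⟨fun e => -C e, ⟨negCycleVec hd.1, fun e he => ?_⟩, fun e => ?_⟩
  · have hc : C e ≠ 0 := by simpa using he
    have h1 := hd.2 e hc
    rw [h3 e, if_pos hc]
    show -C e = -σ e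
    omega
  · by_cases hc : C e = 0
    · rw [h3 e]
      simp [hc]
    · have : (-C e ≠ 0) := by simpa using hc
      rw [if_pos this, h3 e, if_pos hc, neg_neg]

lemma cyc_loop_even {C : E → ℤ} (h : IsCycleVec ι C) (v : V) :
    ∃ t : ℤ, ∑ e ∈ Finset.univ.filter (fun e => ι e = (v, v)), C e = 2 * t := by
  obtain ⟨h1, -, h3, h4, -⟩ := h
  set inc := Finset.univ.filter (fun e => C e ≠ 0 ∧ ((ι e).1 = v ∨ (ι e).2 = v)) with hinc
  set L := Finset.univ.filter (fun e => C e ≠ 0 ∧ ι e = (v, v)) with hL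
  have hLinc : L ⊆ inc := by
    intro e he
    simp only [hL, hinc, Finset.mem_filter, Finset.mem_univ, true_and] at he ⊢
    exact ⟨he.1, Or.inl (by rw [he.2])⟩
  set N := inc \ L with hN
  -- cast the boundary identity to ZMod 2
  have hb : ((∑ e, C e * ((if (ι e).2 = v then 1 else 0) - (if (ι e).1 = v then 1 else 0)) : ℤ) : ZMod 2) = 0 := by
    rw [h3 v]; simp
  have hterm : ∀ e : E, ((C e * ((if (ι e).2 = v then 1 else 0) - (if (ι e).1 = v then 1 else 0)) : ℤ) : ZMod 2)
      = (if e ∈ N then 1 else 0) := by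
    intro e
    by_cases hc : C e = 0
    · have : e ∉ N := by simp [hN, hinc, Finset.mem_sdiff, hc]
      simp [hc, this]
    · by_cases hloop : ι e = (v, v)
      · have hne : e ∉ N := by
          simp only [hN, Finset.mem_sdiff, hL, Finset.mem_filter, Finset.mem_univ, true_and, not_and, not_not]
          tauto
        have hv1 : (ι e).1 = v := by rw [hloop]
        have hv2 : (ι e).2 = v := by rw [hloop]
        simp [hv1, hv2, hne]
      · by_cases hi : (ι e).1 = v ∨ (ι e).2 = v
        · have heN : e ∈ N := by
            simp only [hN, Finset.mem_sdiff, hinc, hL, Finset.mem_filter, Finset.mem_univ, true_and]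
            exact ⟨⟨hc, hi⟩, fun h => hloop h.2⟩
          have hone : ((C e : ℤ) : ZMod 2) = 1 := by
            rcases h1 e with h'|h'|h' <;> simp [h'] at hc ⊢ <;> decide
          rcases hi with hi|hi
          · have hi2 : (ι e).2 ≠ v := by
              intro hh
              exact hloop (Prod.ext_iff.mpr ⟨hi, hh⟩)
            simp only [heN, if_pos, hi, hi2, if_true, if_false]
            push_cast
            rw [hone]
            decide
          · have hi1 : (ι e).1 ≠ v := by
              intro hh
              exact hloop (Prod.ext_iff.mpr ⟨hh, hi⟩)
            simp only [heN, hi, hi1, if_true, if_false]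
            push_cast
            rw [hone]
            decide
        · push_neg at hi
          have : e ∉ N := by
            simp [hN, hinc, Finset.mem_sdiff, hi.1, hi.2]
          simp [hi.1, hi.2, this]
  have hNcard : ((N.card : ℕ) : ZMod 2) = 0 := by
    have := hb
    rw [Int.cast_sum] at this
    rw [Finset.sum_congr rfl (fun e _ => hterm e)] at this
    rwa [Finset.sum_ite_mem, Finset.univ_inter, Finset.sum_const, nsmul_eq_mul, mul_one] at this
  have hNeven : 2 ∣ N.card := by
    rwa [ZMod.natCast_eq_zero_iff] at hNcard
  have hcard : (inc \ L).card + L.card = inc.card :=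
    Finset.card_sdiff_add_card_eq_card hLinc
  have hLeven : 2 ∣ L.card := by
    have hI : inc.card = 0 ∨ inc.card = 2 := h4 v
    rw [← hN] at hcard
    omega
  have hsum_eq : ∑ e ∈ Finset.univ.filter (fun e => ι e = (v, v)), C e = ∑ e ∈ L, C e := by
    refine (Finset.sum_subset ?_ ?_).symm
    · intro e he
      simp only [hL, Finset.mem_filter, Finset.mem_univ, true_and] at he ⊢
      exact he.2
    · intro e he hn
      simp only [Finset.mem_filter, Finset.mem_univ, true_and] at he
      by_contra hne
      exact hn (Finset.mem_filter.mpr ⟨Finset.mem_univ e, hne, he⟩)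
  have hLsum : ((∑ e ∈ L, C e : ℤ) : ZMod 2) = 0 := by
    rw [Int.cast_sum]
    have hone : ∀ e ∈ L, ((C e : ℤ) : ZMod 2) = 1 := by
      intro e he
      simp only [hL, Finset.mem_filter, Finset.mem_univ, true_and] at he
      rcases h1 e with h'|h'|h'
      · exact absurd h' he.1
      · simp [h']
      · rw [h']; decide
    rw [Finset.sum_congr rfl hone, Finset.sum_const, nsmul_eq_mul, mul_one,
      ZMod.natCast_eq_zero_iff]
    exact hLeven
  have h2dvd : (2 : ℤ) ∣ ∑ e ∈ L, C e := by
    rwa [ZMod.intCast_zmod_eq_zero_iff_dvd] at hLsum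
  obtain ⟨t, ht⟩ := h2dvd
  exact ⟨t, by rw [hsum_eq, ht]⟩


lemma chain_diff {α β : E → ℤ} (h : Relation.ReflTransGen (RevStep ι) α β) :
    (∀ v, ∑ e, (β e - α e) *
        ((if (ι e).2 = v then 1 else 0) - (if (ι e).1 = v then 1 else 0)) = 0) ∧
    (∀ v, ∃ m : ℤ, ∑ e ∈ Finset.univ.filter (fun e => ι e = (v, v)), (β e - α e) = 4 * m) := by
  induction h with
  | refl =>
    refine ⟨fun v => by simp, fun v => ⟨0, by simp⟩⟩
  | @tail γ β hab hbc ih =>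
    obtain ⟨C, hd, h3⟩ := hbc
    have hstep : ∀ e, β e - α e = (γ e - α e) + (-2) * C e := by
      intro e
      have := revStep_eq hd h3 e
      omega
    constructor
    · intro v
      calc ∑ e, (β e - α e) * ((if (ι e).2 = v then 1 else 0) - (if (ι e).1 = v then 1 else 0))
          = ∑ e, ((γ e - α e) * ((if (ι e).2 = v then 1 else 0) - (if (ι e).1 = v then 1 else 0))
            + (-2) * (C e * ((if (ι e).2 = v then 1 else 0) - (if (ι e).1 = v then 1 else 0)))) := by
            refine Finset.sum_congr rfl fun e _ => ?_
            rw [hstep e]; ring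
        _ = 0 := by
            rw [Finset.sum_add_distrib, ← Finset.mul_sum, ih.1 v, hd.1.2.2.1 v]
            ring
    · intro v
      obtain ⟨m, hm⟩ := ih.2 v
      obtain ⟨t, ht⟩ := cyc_loop_even hd.1 v
      refine ⟨m - t, ?_⟩
      calc ∑ e ∈ Finset.univ.filter (fun e => ι e = (v, v)), (β e - α e)
          = ∑ e ∈ Finset.univ.filter (fun e => ι e = (v, v)),
              ((γ e - α e) + (-2) * C e) := Finset.sum_congr rfl fun e _ => hstep e
        _ = 4 * m + (-2) * (2 * t) := by
            rw [Finset.sum_add_distrib, ← Finset.mul_sum, hm, ht]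
        _ = 4 * (m - t) := by ring


lemma telescope (f : ℕ → ℤ) : ∀ i j : ℕ, i ≤ j →
    ∑ n ∈ Finset.Ico i j, (f (n + 1) - f n) = f j - f i := by
  intro i j
  induction j with
  | zero => intro h; interval_cases i; simp
  | succ j ih =>
    intro h
    rcases Nat.lt_or_ge i (j+1) with h'|h'
    · have hij : i ≤ j := Nat.lt_succ_iff.mp h'
      rw [Finset.sum_Ico_succ_top hij, ih hij]
      ring
    · have : i = j + 1 := le_antisymm h h'
      subst this
      simp

lemma extract_cycle (ι : E → V × V) (D : E → ℤ)
    (h01 : ∀ e, D e = 0 ∨ D e = 1 ∨ D e = -1)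
    (hne : ∃ e, D e ≠ 0)
    (hbd : ∀ v, ∑ e, D e *
      ((if (ι e).2 = v then 1 else 0) - (if (ι e).1 = v then 1 else 0)) = 0)
    (hloop : ∀ v, ∃ t : ℤ, ∑ e ∈ Finset.univ.filter (fun e => ι e = (v, v)), D e = 2 * t) :
    ∃ C : E → ℤ, IsCycleVec ι C ∧ ∀ e, C e ≠ 0 → C e = D e := by
  by_cases hA : ∃ v e f, e ≠ f ∧ D e ≠ 0 ∧ D f ≠ 0 ∧ ι e = (v, v) ∧ ι f = (v, v)
  · obtain ⟨v, e, f, hef, hDe, hDf, hie, hif⟩ := hA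
    refine ⟨fun x => if x = e ∨ x = f then D x else 0, ⟨?_, ?_, ?_, ?_, ?_⟩, ?_⟩
    · intro x
      by_cases hx : x = e ∨ x = f
      · simpa [hx] using h01 x
      · simp [hx]
    · exact ⟨e, by simp [hDe]⟩
    · intro w
      refine Finset.sum_eq_zero fun x _ => ?_
      by_cases hx : x = e ∨ x = f
      · have hix : ι x = (v, v) := by rcases hx with h|h <;> subst h <;> assumption
        have h1 : (ι x).1 = v := by rw [hix]
        have h2 : (ι x).2 = v := by rw [hix]
        rw [h1, h2, sub_self, mul_zero]
      · simp [hx]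
    · intro u
      by_cases hu : v = u
      · subst hu
        right
        have : (Finset.univ.filter fun x =>
            (if x = e ∨ x = f then D x else 0) ≠ 0 ∧ ((ι x).1 = v ∨ (ι x).2 = v)) = {e, f} := by
          ext x
          simp only [Finset.mem_filter, Finset.mem_univ, true_and, Finset.mem_insert,
            Finset.mem_singleton]
          constructor
          · rintro ⟨hx, -⟩
            by_contra hc
            push_neg at hc
            simp [hc.1, hc.2] at hx
          · rintro (rfl|rfl)
            · exact ⟨by simp [hDe], Or.inl (by rw [hie])⟩
            · exact ⟨by simp [hDf], Or.inl (by rw [hif])⟩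
        rw [this, Finset.card_insert_of_notMem (by simpa using hef), Finset.card_singleton]
      · left
        rw [Finset.card_eq_zero, Finset.filter_eq_empty_iff]
        rintro x - ⟨hx, hinc⟩
        have hx' : x = e ∨ x = f := by
          by_contra hc
          push_neg at hc
          simp [hc.1, hc.2] at hx
        have hix : ι x = (v, v) := by rcases hx' with h|h <;> subst h <;> assumption
        rcases hinc with h|h <;> rw [hix] at h <;> exact hu h
    · intro a b ha hb
      obtain ⟨x, hx, hxa⟩ := ha
      obtain ⟨y, hy, hyb⟩ := hb
      have hx' : x = e ∨ x = f := by
        by_contra hc; push_neg at hc; simp [hc.1, hc.2] at hx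
      have hy' : y = e ∨ y = f := by
        by_contra hc; push_neg at hc; simp [hc.1, hc.2] at hy
      have hix : ι x = (v, v) := by rcases hx' with h|h <;> subst h <;> assumption
      have hiy : ι y = (v, v) := by rcases hy' with h|h <;> subst h <;> assumption
      have hav : a = v := by rcases hxa with h|h <;> rw [hix] at h <;> exact h.symm
      have hbv : b = v := by rcases hyb with h|h <;> rw [hiy] at h <;> exact h.symm
      rw [hav, hbv]
      exact Relation.ReflTransGen.refl
    · intro x hx
      by_cases hx' : x = e ∨ x = f
      · simp [hx']
      · simp [hx'] at hx
  · -- no vertex has two support loops; first show there are no support loops at all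
    have hnoloop : ∀ e v, ι e = (v, v) → D e = 0 := by
      intro e v hiev
      by_contra hDe
      obtain ⟨t, ht⟩ := hloop v
      have hsingle : ∑ x ∈ Finset.univ.filter (fun x => ι x = (v, v)), D x = D e := by
        refine Finset.sum_eq_single_of_mem e (by simp [hiev]) ?_
        intro f hf hfe
        simp only [Finset.mem_filter, Finset.mem_univ, true_and] at hf
        by_contra hDf
        exact hA ⟨v, e, f, Ne.symm hfe, hDe, hDf, hiev, hf⟩
      rw [hsingle] at ht
      rcases h01 e with h|h|h <;> omega
    classical
    set S := Finset.univ.filter (fun e => D e ≠ 0) with hS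
    have hmemS : ∀ e, e ∈ S ↔ D e ≠ 0 := fun e => by simp [hS]
    have hSne : S.Nonempty := by
      obtain ⟨e, he⟩ := hne; exact ⟨e, (hmemS e).mpr he⟩
    set tl : E → V := fun e => if D e = 1 then (ι e).1 else (ι e).2 with htl
    set hdv : E → V := fun e => if D e = 1 then (ι e).2 else (ι e).1 with hhd
    have hterm : ∀ e, D e ≠ 0 → ∀ u, D e *
        ((if (ι e).2 = u then 1 else 0) - (if (ι e).1 = u then 1 else 0))
        = (if hdv e = u then (1:ℤ) else 0) - (if tl e = u then 1 else 0) := by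
      intro e he u
      rcases h01 e with h|h|h
      · exact absurd h he
      · simp [htl, hhd, h]
      · simp only [htl, hhd, h, if_neg (by norm_num : (-1:ℤ) ≠ 1)]
        ring
    have htlhd : ∀ e, e ∈ S → tl e ≠ hdv e := by
      intro e heS h
      have h12 : (ι e).1 = (ι e).2 := by
        by_cases hD : D e = 1
        · simpa [htl, hhd, hD] using h
        · simpa [htl, hhd, hD] using h.symm
      have hl : ι e = ((ι e).1, (ι e).1) := Prod.ext_iff.mpr ⟨rfl, h12.symm⟩
      exact ((hmemS e).mp heS) (hnoloop e (ι e).1 hl)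
    have hcardeq : ∀ u, (S.filter (fun e => hdv e = u)).card
        = (S.filter (fun e => tl e = u)).card := by
      intro u
      have h1 : ∑ e ∈ S, ((if hdv e = u then (1:ℤ) else 0) - (if tl e = u then 1 else 0)) = 0 := by
        have e1 : ∑ e ∈ S, ((if hdv e = u then (1:ℤ) else 0) - (if tl e = u then 1 else 0))
            = ∑ e ∈ S, D e * ((if (ι e).2 = u then 1 else 0) - (if (ι e).1 = u then 1 else 0)) :=
          Finset.sum_congr rfl fun e he => (hterm e ((hmemS e).mp he) u).symm
        have e2 : ∑ e ∈ S, D e * ((if (ι e).2 = u then 1 else 0) - (if (ι e).1 = u then 1 else 0))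
            = ∑ e : E, D e * ((if (ι e).2 = u then 1 else 0) - (if (ι e).1 = u then 1 else 0)) := by
          refine Finset.sum_subset (Finset.subset_univ S) ?_
          intro x _ hx
          rw [hmemS, not_not] at hx
          rw [hx, zero_mul]
        rw [e1, e2, hbd u]
      rw [Finset.sum_sub_distrib, Finset.sum_boole, Finset.sum_boole, sub_eq_zero] at h1
      exact_mod_cast h1
    have hnonempty : ∀ u, (S.filter (fun e => hdv e = u)).Nonempty →
        (S.filter (fun e => tl e = u)).Nonempty := by
      intro u h
      rw [← Finset.card_pos] at h ⊢
      rw [← hcardeq u]; exact h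
    have hnxt' : ∀ u : V, ∃ e : E, (S.filter (fun e => tl e = u)).Nonempty →
        e ∈ S ∧ tl e = u := by
      intro u
      by_cases h : (S.filter (fun e => tl e = u)).Nonempty
      · obtain ⟨e, he⟩ := h
        rw [Finset.mem_filter] at he
        exact ⟨e, fun _ => ⟨he.1, he.2⟩⟩
      · exact ⟨hSne.choose, fun hh => absurd hh h⟩
    choose nxt hnxt using hnxt'
    obtain ⟨e₀, he₀⟩ := hSne
    obtain ⟨w, hw0, hwsucc⟩ : ∃ w : ℕ → V, w 0 = hdv e₀ ∧ ∀ n, w (n+1) = hdv (nxt (w n)) :=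
      ⟨fun n => Nat.rec (hdv e₀) (fun _ prev => hdv (nxt prev)) n, rfl, fun n => rfl⟩
    have hins : ∀ n, (S.filter (fun e => tl e = w n)).Nonempty := by
      intro n
      induction n with
      | zero =>
        exact hnonempty _ ⟨e₀, Finset.mem_filter.mpr ⟨he₀, hw0.symm⟩⟩
      | succ n ih =>
        have h := hnxt (w n) ih
        exact hnonempty _ ⟨nxt (w n), Finset.mem_filter.mpr ⟨h.1, (hwsucc n).symm⟩⟩
    set ed : ℕ → E := fun n => nxt (w n) with hed
    have hedS : ∀ n, ed n ∈ S := fun n => (hnxt (w n) (hins n)).1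
    have hedtl : ∀ n, tl (ed n) = w n := fun n => (hnxt (w n) (hins n)).2
    have hedhd : ∀ n, hdv (ed n) = w (n+1) := fun n => (hwsucc n).symm
    have hrep : ∃ j, ∃ i, i < j ∧ w i = w j := by
      obtain ⟨a, b, hab, heq⟩ := Finite.exists_ne_map_eq_of_infinite w
      rcases Nat.lt_or_ge a b with h|h
      · exact ⟨b, a, h, heq⟩
      · exact ⟨a, b, lt_of_le_of_ne h (Ne.symm hab), heq.symm⟩
    obtain ⟨j₀, i₀, hij, hweq, hmin⟩ :
        ∃ j i, i < j ∧ w i = w j ∧ ∀ b < j, ¬ ∃ a, a < b ∧ w a = w b := by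
      refine ⟨Nat.find hrep, ?_⟩
      obtain ⟨i, hi, he⟩ := Nat.find_spec hrep
      exact ⟨i, hi, he, fun b hb => Nat.find_min hrep hb⟩
    have hwinj : ∀ a b, a < b → b < j₀ → w a ≠ w b := by
      intro a b hab hbj heq
      exact hmin b hbj ⟨a, hab, heq⟩
    have hlen : i₀ + 1 < j₀ := by
      rcases Nat.lt_or_ge (i₀ + 1) j₀ with h|h
      · exact h
      · exfalso
        have hj : j₀ = i₀ + 1 := le_antisymm h hij
        have h1 : tl (ed i₀) = hdv (ed i₀) := by
          rw [hedtl i₀, hedhd i₀, ← hj, ← hweq]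
        exact htlhd (ed i₀) (hedS i₀) h1
    set I := Finset.Ico i₀ j₀ with hI
    have hwinjI : ∀ a ∈ I, ∀ b ∈ I, w a = w b → a = b := by
      intro a ha b hb heq
      simp only [hI, Finset.mem_Ico] at ha hb
      rcases lt_trichotomy a b with h|h|h
      · exact absurd heq (hwinj a b h hb.2)
      · exact h
      · exact absurd heq.symm (hwinj b a h ha.2)
    have hedinj : ∀ a ∈ I, ∀ b ∈ I, ed a = ed b → a = b := by
      intro a ha b hb heq
      refine hwinjI a ha b hb ?_
      rw [← hedtl a, ← hedtl b, heq]
    set T := I.image ed with hT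
    have hi₀I : i₀ ∈ I := by simp [hI, Finset.mem_Ico, hij]
    have hsupp : ∀ x, (if x ∈ T then D x else 0) ≠ 0 ↔ x ∈ T := by
      intro x
      by_cases hx : x ∈ T
      · rw [if_pos hx]
        simp only [hx, iff_true]
        obtain ⟨n, hn, rfl⟩ := Finset.mem_image.mp hx
        exact (hmemS _).mp (hedS n)
      · simp [hx]
    have hinc : ∀ x u, (((ι x).1 = u ∨ (ι x).2 = u) ↔ (tl x = u ∨ hdv x = u)) := by
      intro x u
      by_cases hD : D x = 1 <;> simp only [htl, hhd, hD, if_pos, if_neg, if_true, if_false] <;>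
        first
          | tauto
          | (constructor <;> (intro h; tauto))
    have hiota : ∀ n, ι (ed n) = (w n, w (n+1)) ∨ ι (ed n) = (w (n+1), w n) := by
      intro n
      have h1 := hedtl n
      have h2 := hedhd n
      by_cases hD : D (ed n) = 1
      · left
        rw [← h1, ← h2]
        simp only [htl, hhd, hD, if_pos]
      · right
        rw [← h1, ← h2]
        simp only [htl, hhd, hD, if_neg, if_false]
    refine ⟨fun x => if x ∈ T then D x else 0, ⟨?_, ?_, ?_, ?_, ?_⟩, ?_⟩
    · intro x
      by_cases hx : x ∈ T
      · simpa [hx] using h01 x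
      · simp [hx]
    · refine ⟨ed i₀, ?_⟩
      rw [hsupp]
      exact Finset.mem_image.mpr ⟨i₀, hi₀I, rfl⟩
    · -- boundary
      intro u
      have e0 : ∑ x : E, (if x ∈ T then D x else 0) *
          ((if (ι x).2 = u then 1 else 0) - (if (ι x).1 = u then 1 else 0))
          = ∑ x ∈ T, (if x ∈ T then D x else 0) *
          ((if (ι x).2 = u then 1 else 0) - (if (ι x).1 = u then 1 else 0)) := by
        refine (Finset.sum_subset (Finset.subset_univ T) ?_).symm
        intro x _ hx
        rw [if_neg hx, zero_mul]
      have e1 : ∑ x ∈ T, (if x ∈ T then D x else 0) *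
          ((if (ι x).2 = u then 1 else 0) - (if (ι x).1 = u then 1 else 0))
          = ∑ x ∈ T, D x *
          ((if (ι x).2 = u then 1 else 0) - (if (ι x).1 = u then 1 else 0)) := by
        refine Finset.sum_congr rfl fun x hx => ?_
        rw [if_pos hx]
      have e2 : ∑ x ∈ T, D x *
          ((if (ι x).2 = u then 1 else 0) - (if (ι x).1 = u then 1 else 0))
          = ∑ n ∈ I, D (ed n) *
          ((if (ι (ed n)).2 = u then 1 else 0) - (if (ι (ed n)).1 = u then 1 else 0)) := by
        rw [hT]
        exact Finset.sum_image hedinj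
      have e3 : ∑ n ∈ I, D (ed n) *
          ((if (ι (ed n)).2 = u then 1 else 0) - (if (ι (ed n)).1 = u then 1 else 0))
          = ∑ n ∈ I, ((if w (n+1) = u then (1:ℤ) else 0) - (if w n = u then 1 else 0)) := by
        refine Finset.sum_congr rfl fun n _ => ?_
        rw [hterm (ed n) ((hmemS _).mp (hedS n)) u, hedtl n, hedhd n]
      have e4 : ∑ n ∈ I, ((if w (n+1) = u then (1:ℤ) else 0) - (if w n = u then 1 else 0))
          = (if w j₀ = u then (1:ℤ) else 0) - (if w i₀ = u then 1 else 0) :=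
        telescope (fun n => if w n = u then (1:ℤ) else 0) i₀ j₀ (le_of_lt hij)
      rw [e0, e1, e2, e3, e4, ← hweq, sub_self]
    · -- degrees
      intro u
      by_cases hu : ∃ n, n ∈ I ∧ w n = u
      · obtain ⟨n, hnI, hwn⟩ := hu
        right
        have hnIco := Finset.mem_Ico.mp hnI
        set prv := if n = i₀ then j₀ - 1 else n - 1 with hprv
        have hprvI : prv ∈ I := by
          rw [hprv]
          by_cases h : n = i₀ <;> simp only [h, if_pos, if_neg, if_true, if_false] <;>
            rw [Finset.mem_Ico] <;> omega
        have hprvsucc : prv + 1 = j₀ ∨ prv + 1 = n := by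
          rw [hprv]
          by_cases h : n = i₀ <;> simp only [h, if_pos, if_neg, if_true, if_false] <;> omega
        have hprvhd : hdv (ed prv) = u := by
          by_cases h : n = i₀
          · have h1 : prv + 1 = j₀ := by rw [hprv, if_pos h]; omega
            rw [hedhd, h1, ← hweq, ← h]
            exact hwn
          · have h1 : prv + 1 = n := by rw [hprv, if_neg h]; omega
            rw [hedhd, h1]
            exact hwn
        have hprvne : prv ≠ n := by
          rw [hprv]
          by_cases h : n = i₀ <;> simp only [h, if_pos, if_neg, if_true, if_false] <;> omega
        have hedne : ed prv ≠ ed n := fun hh => hprvne (hedinj prv hprvI n hnI hh)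
        have hFeq : (Finset.univ.filter fun x =>
            (if x ∈ T then D x else 0) ≠ 0 ∧ ((ι x).1 = u ∨ (ι x).2 = u)) = {ed n, ed prv} := by
          ext x
          simp only [Finset.mem_filter, Finset.mem_univ, true_and, Finset.mem_insert,
            Finset.mem_singleton]
          constructor
          · rintro ⟨hx, hincx⟩
            rw [hsupp] at hx
            obtain ⟨m, hmI, rfl⟩ := Finset.mem_image.mp hx
            have hmIco := Finset.mem_Ico.mp hmI
            rcases (hinc (ed m) u).mp hincx with h|h
            · rw [hedtl] at h
              left
              exact congrArg ed (hwinjI m hmI n hnI (h.trans hwn.symm))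
            · rw [hedhd] at h
              right
              by_cases hm : m + 1 = j₀
              · have hni : n = i₀ := by
                  refine hwinjI n hnI i₀ hi₀I ?_
                  rw [hwn, hweq, ← hm, h]
                have hprvm : prv = m := by rw [hprv, if_pos hni]; omega
                rw [hprvm]
              · have hmm : m + 1 ∈ I := by rw [Finset.mem_Ico]; omega
                have hnm : m + 1 = n := hwinjI (m+1) hmm n hnI (h.trans hwn.symm)
                have hni : n ≠ i₀ := by omega
                have hprvm : prv = m := by rw [hprv, if_neg hni]; omega
                rw [hprvm]
          · rintro (rfl|rfl)
            · refine ⟨(hsupp _).mpr (Finset.mem_image.mpr ⟨n, hnI, rfl⟩), ?_⟩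
              exact (hinc (ed n) u).mpr (Or.inl (by rw [hedtl]; exact hwn))
            · refine ⟨(hsupp _).mpr (Finset.mem_image.mpr ⟨prv, hprvI, rfl⟩), ?_⟩
              exact (hinc (ed prv) u).mpr (Or.inr hprvhd)
        rw [hFeq, Finset.card_insert_of_notMem (by simpa using hedne.symm),
          Finset.card_singleton]
      · left
        rw [Finset.card_eq_zero, Finset.filter_eq_empty_iff]
        rintro x - ⟨hx, hincx⟩
        rw [hsupp] at hx
        obtain ⟨m, hmI, rfl⟩ := Finset.mem_image.mp hx
        have hmIco := Finset.mem_Ico.mp hmI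
        rcases (hinc (ed m) u).mp hincx with h|h
        · rw [hedtl] at h
          exact hu ⟨m, hmI, h⟩
        · rw [hedhd] at h
          by_cases hm : m + 1 = j₀
          · rw [hm, ← hweq] at h
            exact hu ⟨i₀, hi₀I, h⟩
          · have : m + 1 ∈ I := by rw [Finset.mem_Ico]; omega
            exact hu ⟨m + 1, this, h⟩
    · -- connectivity
      intro a b ha hb
      have hsym : Symmetric (fun x y : V => ∃ e ∈ {e | (if e ∈ T then D e else 0) ≠ 0},
          ι e = (x, y) ∨ ι e = (y, x)) := by
        rintro x y ⟨e, he, h⟩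
        exact ⟨e, he, h.symm⟩
      have hstepR : ∀ n ∈ I, ∃ e ∈ {e | (if e ∈ T then D e else 0) ≠ 0},
          ι e = (w n, w (n+1)) ∨ ι e = (w (n+1), w n) := by
        intro n hn
        refine ⟨ed n, ?_, hiota n⟩
        show (if ed n ∈ T then D (ed n) else 0) ≠ 0
        rw [hsupp]
        exact Finset.mem_image.mpr ⟨n, hn, rfl⟩
      have hreach : ∀ n, i₀ ≤ n → n ≤ j₀ →
          ReachIn ι {e | (if e ∈ T then D e else 0) ≠ 0} (w i₀) (w n) := by
        intro n hn1
        induction n, hn1 using Nat.le_induction with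
        | base => intro _; exact Relation.ReflTransGen.refl
        | succ n hn ih =>
          intro h2
          have hnI : n ∈ I := by rw [Finset.mem_Ico]; omega
          exact Relation.ReflTransGen.tail (ih (by omega)) (hstepR n hnI)
      have hvertex : ∀ c : V,
          (∃ e, (if e ∈ T then D e else 0) ≠ 0 ∧ ((ι e).1 = c ∨ (ι e).2 = c)) →
          ReachIn ι {e | (if e ∈ T then D e else 0) ≠ 0} (w i₀) c := by
        rintro c ⟨x, hx, hincx⟩
        rw [hsupp] at hx
        obtain ⟨m, hmI, rfl⟩ := Finset.mem_image.mp hx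
        have hmIco := Finset.mem_Ico.mp hmI
        rcases (hinc (ed m) c).mp hincx with h|h
        · rw [hedtl] at h
          rw [← h]
          exact hreach m hmIco.1 (by omega)
        · rw [hedhd] at h
          rw [← h]
          exact hreach (m+1) (by omega) (by omega)
      exact Relation.ReflTransGen.trans
        ((@Relation.ReflTransGen.stdSymm _ _ ⟨fun a b h => hsym h⟩).symm _ _ (hvertex a ha)) (hvertex b hb)
    · intro x hx
      show (if x ∈ T then D x else 0) = D x
      rw [if_pos ((hsupp x).mp (by exact hx))]

end AuxLemmas

/-- for an acyclic cycle orientation configuration `𝔠` on a connected graph,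
the `𝔠`-faithful orientations form a system of representatives for the cycle reversal
classes: every class contains exactly one. -/
theorem faithful_orientations_are_representatives (ι : E → V × V)
    (hconn : Conn ι Set.univ)
    (𝔠 : Set (E → ℤ)) (hcfg : IsConfig ι 𝔠) (hacyc : ConfigAcyclic 𝔠)
    (σ : E → ℤ) (hσ : IsOrient σ) :
    ∃! τ : E → ℤ, IsOrient τ ∧ Relation.ReflTransGen (RevStep ι) σ τ ∧
      Faithful ι 𝔠 τ := by
  obtain ⟨τ, hτo, hτr, hτf⟩ := exists_faithful hcfg hacyc σ hσ
  refine ⟨τ, ⟨hτo, hτr, hτf⟩, ?_⟩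
  rintro ρ ⟨hρo, hρr, hρf⟩
  by_contra hne'
  have hchain : Relation.ReflTransGen (RevStep ι) ρ τ :=
    Relation.ReflTransGen.trans
      ((@Relation.ReflTransGen.stdSymm _ _ ⟨fun a b h => revStep_symm h⟩).symm _ _ hρr) hτr
  obtain ⟨hbd2, hloop2⟩ := chain_diff hchain
  set D : E → ℤ := fun e => if ρ e = τ e then 0 else τ e with hD
  have hdiff : ∀ e, τ e - ρ e = 2 * D e := by
    intro e
    simp only [hD]
    by_cases h : ρ e = τ e
    · rw [if_pos h]; omega
    · rw [if_neg h]
      rcases hρo e with h1|h1 <;> rcases hτo e with h2|h2 <;> omega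
  have h01 : ∀ e, D e = 0 ∨ D e = 1 ∨ D e = -1 := by
    intro e
    simp only [hD]
    by_cases h : ρ e = τ e
    · left; rw [if_pos h]
    · rw [if_neg h]
      rcases hτo e with h2|h2 <;> [right; right] <;> [left; right] <;> rw [h2]
  have hDne : ∃ e, D e ≠ 0 := by
    have : ∃ e, ρ e ≠ τ e := by
      by_contra h
      push_neg at h
      exact hne' (funext h)
    obtain ⟨e, he⟩ := this
    refine ⟨e, ?_⟩
    simp only [hD, if_neg he]
    exact orient_ne_zero hτo e
  have hbdD : ∀ v, ∑ e, D e *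
      ((if (ι e).2 = v then 1 else 0) - (if (ι e).1 = v then 1 else 0)) = 0 := by
    intro v
    have h := hbd2 v
    have h2 : ∑ e, (τ e - ρ e) *
        ((if (ι e).2 = v then 1 else 0) - (if (ι e).1 = v then 1 else 0))
        = 2 * ∑ e, D e * ((if (ι e).2 = v then 1 else 0) - (if (ι e).1 = v then 1 else 0)) := by
      rw [Finset.mul_sum]
      refine Finset.sum_congr rfl fun e _ => ?_
      rw [hdiff e, mul_assoc]
    rw [h2] at h
    linarith
  have hloopD : ∀ v, ∃ t : ℤ,
      ∑ e ∈ Finset.univ.filter (fun e => ι e = (v, v)), D e = 2 * t := by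
    intro v
    obtain ⟨m, hm⟩ := hloop2 v
    have h2 : ∑ e ∈ Finset.univ.filter (fun e => ι e = (v, v)), (τ e - ρ e)
        = 2 * ∑ e ∈ Finset.univ.filter (fun e => ι e = (v, v)), D e := by
      rw [Finset.mul_sum]
      exact Finset.sum_congr rfl fun e _ => hdiff e
    rw [h2] at hm
    exact ⟨m, by linarith⟩
  obtain ⟨C, hC, hCD⟩ := extract_cycle ι D h01 hDne hbdD hloopD
  have hsuppD : ∀ e, C e ≠ 0 → ρ e ≠ τ e ∧ D e = τ e := by
    intro e he
    have hCe := hCD e he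
    by_cases h : ρ e = τ e
    · exfalso
      apply he
      rw [hCe]
      simp only [hD, if_pos h]
    · exact ⟨h, by simp only [hD, if_neg h]⟩
  have hCτ : DirCycle ι τ C := by
    refine ⟨hC, fun e he => ?_⟩
    rw [hCD e he]
    exact (hsuppD e he).2
  have hCρ : DirCycle ι ρ (fun e => -C e) := by
    refine ⟨negCycleVec hC, fun e he => ?_⟩
    have he' : C e ≠ 0 := by simpa using he
    obtain ⟨hne2, hDτ⟩ := hsuppD e he'
    have hCe := hCD e he'
    show -C e = ρ e
    rw [hCe, hDτ]
    rcases hρo e with h1|h1 <;> rcases hτo e with h2|h2 <;> omega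
  have hmem : C ∈ 𝔠 := hτf C hCτ
  have hmem' : (fun e => -C e) ∈ 𝔠 := hρf _ hCρ
  exact (hcfg.2 C hC).mp hmem hmem'
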